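/- Let δ be a level-1 representable symbolic 3-dissimilarity on X and Y ⊆ X with |Y| ≥ 3. Then the restriction δ|_Y (to nonempty subsets of Y of size at most 3) is also level-1 representable. -/

import Mathlib

/-- A rooted phylogenetic network on leaf set `X`: a rooted DAG whose leaves are
identified with `X`, with no vertex of indegree one and outdegree one. -/
structure PhyloNetwork (X : Type) [Fintype X] [DecidableEq X] where
  V : Type
  [instFin : Fintype V]
  [instDec : DecidableEq V]
  adj : V → V → Prop
  root : V
  leaf : X → V
  acyclic : ∀ v : V, ¬ Relation.TransGen adj v v
  root_no_in : ∀ u : V, ¬ adj u root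
  connected : ∀ v : V, Relation.ReflTransGen adj root v
  leaf_inj : Function.Injective leaf
  leaf_no_out : ∀ (x : X) (w : V), ¬ adj (leaf x) w
  leaves_only : ∀ v : V, (∀ w : V, ¬ adj v w) → v = root ∨ ∃ x, leaf x = v
  no_inout_one : ∀ v : V, ¬ ((∃! u : V, adj u v) ∧ (∃! w : V, adj v w))

namespace PhyloNetwork

variable {X : Type} [Fintype X] [DecidableEq X]

/-- Reachability by a directed path. -/
def reaches (N : PhyloNetwork X) : N.V → N.V → Prop := Relation.ReflTransGen N.adj

/-- The offspring set of a vertex: all leaves below it. -/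
def F (N : PhyloNetwork X) (v : N.V) : Set X := {x | N.reaches v (N.leaf x)}

/-- `v` is a leaf vertex. -/
def IsLeafV (N : PhyloNetwork X) (v : N.V) : Prop := ∃ x, N.leaf x = v

/-- `v` is a lowest common ancestor of the set `Y` of leaves. -/
def IsLca (N : PhyloNetwork X) (Y : Finset X) (v : N.V) : Prop :=
  (∀ x ∈ Y, x ∈ N.F v) ∧ ∀ w : N.V, N.adj v w → ¬ (∀ x ∈ Y, x ∈ N.F w)

/-- A cycle of a (level-1) network: two edge-disjoint, internally vertex-disjoint
directed paths from a root `r` to a hybrid `h`, with at least 3 vertices in total.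
`side1` and `side2` list the internal vertices of the two sides in order. -/
structure NCycle (N : PhyloNetwork X) where
  r : N.V
  h : N.V
  side1 : List N.V
  side2 : List N.V
  chain1 : List.Chain N.adj r (side1 ++ [h])
  chain2 : List.Chain N.adj r (side2 ++ [h])
  ne : r ≠ h
  nodup1 : (r :: (side1 ++ [h])).Nodup
  nodup2 : (r :: (side2 ++ [h])).Nodup
  disj : ∀ v ∈ side1, v ∉ side2
  nontriv : side1 ≠ [] ∨ side2 ≠ []

/-- The vertex set of a cycle. -/
def NCycle.verts {N : PhyloNetwork X} (C : NCycle N) : Set N.V :=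
  {C.r, C.h} ∪ {v | v ∈ C.side1} ∪ {v | v ∈ C.side2}

/-- A level-1 network: every vertex belongs to at most one cycle. -/
def IsLevelOne (N : PhyloNetwork X) : Prop :=
  ∀ C C' : NCycle N, ∀ v : N.V, v ∈ C.verts → v ∈ C'.verts → C.verts = C'.verts

/-- `R(C)`: the leaves below the root of the cycle `C`. -/
def NCycle.RC {N : PhyloNetwork X} (C : NCycle N) : Set X := N.F C.r

/-- `H(C)`: the leaves below the hybrid of the cycle `C`. -/
def NCycle.HC {N : PhyloNetwork X} (C : NCycle N) : Set X := N.F C.h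

/-- `v` is the last ancestor `v_C(x)` of the leaf `x` lying in the cycle `C`. -/
def NCycle.LastAnc {N : PhyloNetwork X} (C : NCycle N) (v : N.V) (x : X) : Prop :=
  v ∈ C.verts ∧ N.reaches v (N.leaf x) ∧
    ∀ w ∈ C.verts, N.reaches w (N.leaf x) → N.reaches w v

end PhyloNetwork

/-- A symbolic 3-dissimilarity on `X` with values in `M ∪ {⊙}` (`⊙` = `none`):
singletons get `⊙`, sets of size 2 or 3 get values in `M`. -/
structure SymbolicDissim3 (X M : Type) [DecidableEq X] where
  val : Finset X → Option M
  singleton_none : ∀ A : Finset X, A.card = 1 → val A = none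
  pair_some : ∀ A : Finset X, A.card = 2 ∨ A.card = 3 → val A ≠ none

/-- The labelled network `(N,t)` represents `δ`: for every `Y ⊆ X` of size 2 or 3,
`δ(Y) = t(lca_N(Y))`. -/
def PhyloNetwork.Represents {X M : Type} [Fintype X] [DecidableEq X]
    (N : PhyloNetwork X) (t : N.V → M) (d : SymbolicDissim3 X M) : Prop :=
  ∀ Y : Finset X, Y.card = 2 ∨ Y.card = 3 → ∀ v : N.V, N.IsLca Y v → d.val Y = some (t v)

/-- `δ` is level-1 representable. -/
def SymbolicDissim3.LevelOneRepresentable {X M : Type} [Fintype X] [DecidableEq X]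
    (d : SymbolicDissim3 X M) : Prop :=
  ∃ (N : PhyloNetwork X) (t : N.V → M), N.IsLevelOne ∧ N.Represents t d

/-- The restriction of a symbolic 3-dissimilarity on `X` to a subset `Y ⊆ X`. -/
def SymbolicDissim3.restrict {X M : Type} [DecidableEq X]
    (d : SymbolicDissim3 X M) (Y : Finset X) : SymbolicDissim3 {x // x ∈ Y} M where
  val A := d.val (A.map (Function.Embedding.subtype fun x => x ∈ Y))
  singleton_none A h := d.singleton_none _ (by simpa using h)
  pair_some A h := d.pair_some _ (by simpa using h)


namespace PrunePre

structure Pre (L M : Type) where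
  V : Type
  [instFin : Fintype V]
  [instDec : DecidableEq V]
  adj : V → V → Prop
  root : V
  leaf : L → V
  lab : V → M

attribute [instance] Pre.instFin Pre.instDec

namespace Pre

variable {L M : Type}

def F (G : Pre L M) (v : G.V) : Set L := {x | Relation.ReflTransGen G.adj v (G.leaf x)}

def IsLca (G : Pre L M) (A : Finset L) (v : G.V) : Prop :=
  (∀ x ∈ A, x ∈ G.F v) ∧ ∀ w : G.V, G.adj v w → ¬ (∀ x ∈ A, x ∈ G.F w)

structure Cyc (G : Pre L M) where
  r : G.V
  h : G.V
  side1 : List G.V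
  side2 : List G.V
  chain1 : List.Chain G.adj r (side1 ++ [h])
  chain2 : List.Chain G.adj r (side2 ++ [h])
  ne : r ≠ h
  nodup1 : (r :: (side1 ++ [h])).Nodup
  nodup2 : (r :: (side2 ++ [h])).Nodup
  disj : ∀ v ∈ side1, v ∉ side2
  nontriv : side1 ≠ [] ∨ side2 ≠ []

def Cyc.verts {G : Pre L M} (C : Cyc G) : Set G.V :=
  {C.r, C.h} ∪ {v | v ∈ C.side1} ∪ {v | v ∈ C.side2}

structure Invar (G : Pre L M) (dv : Finset L → Option M) : Prop where
  acyclic : ∀ v, ¬ Relation.TransGen G.adj v v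
  root_no_in : ∀ u, ¬ G.adj u G.root
  connected : ∀ v, Relation.ReflTransGen G.adj G.root v
  leaf_inj : Function.Injective G.leaf
  leaf_no_out : ∀ x w, ¬ G.adj (G.leaf x) w
  level1 : ∀ C C' : Cyc G, ∀ v, v ∈ C.verts → v ∈ C'.verts → C.verts = C'.verts
  rep : ∀ A : Finset L, A.card = 2 ∨ A.card = 3 → ∀ v, G.IsLca A v → dv A = some (G.lab v)

end Pre

/-! ### list lemmas -/

section Lists
set_option linter.unusedSectionVars false

variable {α : Type} [DecidableEq α]

theorem shared_mem {r h : α} {s1 s2 : List α}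
    (nd1 : (r :: (s1 ++ [h])).Nodup)
    (dj : ∀ v ∈ s1, v ∉ s2) {y : α}
    (h1 : y ∈ r :: (s1 ++ [h])) (h2 : y ∈ r :: (s2 ++ [h])) : y = r ∨ y = h := by
  rcases List.mem_cons.mp h1 with rfl | h1'
  · exact Or.inl rfl
  rcases List.mem_append.mp h1' with hy1 | hy1
  · rcases List.mem_cons.mp h2 with rfl | h2'
    · exact absurd hy1 (fun hc => (List.nodup_cons.mp nd1).1 (List.mem_append.mpr (Or.inl hc)))
    rcases List.mem_append.mp h2' with hy2 | hy2
    · exact absurd hy2 (dj _ hy1)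
    · have : y = h := by simpa using hy2
      subst this
      exact absurd hy1 (fun hc =>
        (List.disjoint_of_nodup_append (List.nodup_cons.mp nd1).2) hc (by simp))
  · right; simpa using hy1

/-- Auxiliary: if the chain list `r :: s ++ [h]` splits as `A ++ p :: c :: B`, and the list
is nodup, then `p = r`, `c = h` and `s = []`. -/
theorem mem_of_getLast?' {α : Type} {l : List α} {x : α} (h : l.getLast? = some x) : x ∈ l := by
  rcases List.mem_getLast?_eq_getLast (show x ∈ l.getLast? from by rw [Option.mem_def]; exact h)
    with ⟨hne, hh⟩
  exact hh ▸ List.getLast_mem hne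

/-- If the chain list `r :: s ++ [h]` splits as `A ++ p :: c :: B`, is nodup, and
`p, c ∈ {r, h}` with `p ≠ c`, then `s = []`. -/
theorem split_forces {r h p c : α} {s : List α}
    (nd : (r :: (s ++ [h])).Nodup)
    (hpr : p = r ∨ p = h) (hcr : c = r ∨ c = h) (hpc : p ≠ c)
    {A B : List α} (e : r :: (s ++ [h]) = A ++ p :: c :: B) : s = [] := by
  have hlast : (r :: (s ++ [h])).getLast? = some h := by
    rw [show r :: (s ++ [h]) = (r :: s) ++ [h] by simp]
    exact List.getLast?_concat
  have hndA : (p :: c :: B).Nodup := by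
    rw [e] at nd; exact nd.of_append_right
  rw [e] at hlast
  have hph : p ≠ h := by
    intro hp
    have h2 := hlast
    rw [List.getLast?_append_cons, List.getLast?_cons_cons] at h2
    have hmem : h ∈ c :: B := mem_of_getLast?' h2
    exact (List.nodup_cons.mp hndA).1 (by rw [hp]; exact hmem)
  have hpr' : p = r := hpr.resolve_right hph
  rw [e] at nd
  have nd0 : (r :: (s ++ [h])).Nodup := e ▸ nd
  have hch : c = h := by
    rcases hcr with hcr | hcr
    · exfalso
      cases A with
      | nil => exact hpc (hpr'.trans hcr.symm)
      | cons a A' =>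
        have he2 : s ++ [h] = A' ++ p :: c :: B := by simpa using congrArg (·.tail) e
        have : c ∈ s ++ [h] := by rw [he2]; simp
        rw [hcr] at this
        exact (List.nodup_cons.mp nd0).1 this
    · exact hcr
  cases A with
  | cons a A' =>
    exfalso
    have he2 : s ++ [h] = A' ++ p :: c :: B := by simpa using congrArg (·.tail) e
    have : p ∈ s ++ [h] := by rw [he2]; simp
    rw [hpr'] at this
    exact (List.nodup_cons.mp nd0).1 this
  | nil =>
    simp only [List.nil_append] at e
    have he : s ++ [h] = c :: B := by simpa using congrArg (·.tail) e
    cases s with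
    | nil => rfl
    | cons x s' =>
      exfalso
      have hx : x = c := by simpa using congrArg (·.head?) he
      have hnd2 : ((x :: s') ++ [h]).Nodup := (List.nodup_cons.mp nd0).2
      exact (List.disjoint_of_nodup_append hnd2)
        (show h ∈ x :: s' by rw [hx, hch]; exact List.mem_cons_self) (by simp)

end Lists

section InsLoop

set_option linter.unusedSectionVars false

variable {α : Type} [DecidableEq α] (p c v0 : α)

/-- Walk along a chain starting at `a` with remaining vertices `m`; insert `v0`
between every consecutive occurrence of the pair `(p, c)`. -/
def insLoop : α → List α → List α
  | _, [] => []
  | a, b :: m => if a = p ∧ b = c then v0 :: b :: insLoop b m else b :: insLoop b m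

theorem insLoop_sub : ∀ a m, ∀ x ∈ insLoop p c v0 a m, x ∈ m ∨ x = v0
  | _, [] => by intro x hx; simp [insLoop] at hx
  | a, b :: m => by
    intro x hx
    simp only [insLoop] at hx
    split at hx
    · rcases List.mem_cons.mp hx with rfl | hx
      · exact Or.inr rfl
      rcases List.mem_cons.mp hx with rfl | hx
      · exact Or.inl (List.mem_cons_self)
      · rcases insLoop_sub b m x hx with h | h
        · exact Or.inl (List.mem_cons_of_mem _ h)
        · exact Or.inr h
    · rcases List.mem_cons.mp hx with rfl | hx
      · exact Or.inl (List.mem_cons_self)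
      · rcases insLoop_sub b m x hx with h | h
        · exact Or.inl (List.mem_cons_of_mem _ h)
        · exact Or.inr h

theorem sub_insLoop : ∀ a m, ∀ x ∈ m, x ∈ insLoop p c v0 a m
  | _, [] => by intro x hx; simp at hx
  | a, b :: m => by
    intro x hx
    simp only [insLoop]
    rcases List.mem_cons.mp hx with rfl | hx
    · split <;> simp
    · split <;> simp [sub_insLoop b m x hx]

theorem insLoop_ne_nil : ∀ a m, m ≠ [] → insLoop p c v0 a m ≠ []
  | _, [], h => absurd rfl h
  | a, b :: m, _ => by simp only [insLoop]; split <;> simp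

theorem getLast?_insLoop : ∀ a m, m ≠ [] → (insLoop p c v0 a m).getLast? = m.getLast?
  | _, [], h => absurd rfl h
  | a, b :: m, _ => by
    rcases eq_or_ne m [] with rfl | hm
    · simp only [insLoop]; split <;> simp [insLoop]
    · obtain ⟨z, m', rfl⟩ := List.exists_cons_of_ne_nil hm
      have ih := getLast?_insLoop b (z :: m') (by simp)
      have hne := insLoop_ne_nil p c v0 b (z :: m') (by simp)
      obtain ⟨y, l', hL⟩ := List.exists_cons_of_ne_nil hne
      rw [insLoop]
      split <;>
      · rw [hL] at ih ⊢
        simp only [List.getLast?_cons_cons]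
        exact ih

theorem v0_mem_insLoop : ∀ a m, v0 ∉ a :: m → v0 ∈ insLoop p c v0 a m →
    ∃ A B, a :: m = A ++ p :: c :: B
  | _, [], _, h => by simp [insLoop] at h
  | a, b :: m, hv, h => by
    simp only [insLoop] at h
    split at h
    · next hif => exact ⟨[], m, by simp [hif.1, hif.2]⟩
    · rcases List.mem_cons.mp h with h | h
      · exact absurd (by rw [h]; exact List.mem_cons_of_mem a (List.mem_cons_self (a := b) (l := m))) hv
      · obtain ⟨A, B, hab⟩ := v0_mem_insLoop b m (fun hc => hv (List.mem_cons_of_mem a hc)) h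
        exact ⟨a :: A, B, by rw [List.cons_append, ← hab]⟩

theorem nodup_insLoop : ∀ a m, (a :: m).Nodup → v0 ∉ a :: m → (a :: insLoop p c v0 a m).Nodup
  | _, [], _, _ => by simp [insLoop]
  | a, b :: m, hnd, hv => by
    have hndt : (b :: m).Nodup := (List.nodup_cons.mp hnd).2
    have hvt : v0 ∉ b :: m := fun hc => hv (List.mem_cons_of_mem a hc)
    have ih := nodup_insLoop b m hndt hvt
    have hanb : a ∉ b :: m := (List.nodup_cons.mp hnd).1
    have hav : a ≠ v0 := fun hc => hv (hc ▸ List.mem_cons_self (a := a))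
    have hamem : a ∉ insLoop p c v0 b m := by
      intro hc
      rcases insLoop_sub p c v0 b m a hc with h | h
      · exact hanb (List.mem_cons_of_mem b h)
      · exact hav h
    simp only [insLoop]
    split
    · next hif =>
      have hvmem : v0 ∉ insLoop p c v0 b m := by
        intro hc
        obtain ⟨A, B, hab⟩ := v0_mem_insLoop p c v0 b m hvt hc
        have : p ∈ b :: m := by rw [hab]; simp
        exact hanb (hif.1 ▸ this)
      refine List.nodup_cons.mpr ⟨?_, List.nodup_cons.mpr ⟨?_, ih⟩⟩
      · intro hc
        rcases List.mem_cons.mp hc with h | hc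
        · exact hav h
        rcases List.mem_cons.mp hc with h | hc
        · exact hanb (h ▸ List.mem_cons_self (a := b) (l := m))
        · exact hamem hc
      · intro hc
        rcases List.mem_cons.mp hc with h | hc
        · exact hvt (h ▸ List.mem_cons_self (a := b) (l := m))
        · exact hvmem hc
    · refine List.nodup_cons.mpr ⟨?_, ih⟩
      intro hc
      rcases List.mem_cons.mp hc with h | hc
      · exact hanb (h ▸ List.mem_cons_self (a := b) (l := m))
      · exact hamem hc

theorem chain_insLoop {R : α → α → Prop} (hR1 : R p v0) (hR2 : R v0 c) :
    ∀ a m, List.Chain (fun x y => R x y ∨ (x = p ∧ y = c)) a m →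
      List.Chain R a (insLoop p c v0 a m)
  | _, [], _ => by simp [insLoop, List.Chain]
  | a, b :: m, hch => by
    rcases List.chain_cons.mp hch with ⟨hab, hbm⟩
    have ih := chain_insLoop hR1 hR2 b m hbm
    simp only [insLoop]
    split
    · next hif =>
      exact List.chain_cons.mpr ⟨hif.1 ▸ hR1,
        List.chain_cons.mpr ⟨hif.2 ▸ hR2, ih⟩⟩
    · next hif =>
      rcases hab with hab | hab
      · exact List.chain_cons.mpr ⟨hab, ih⟩
      · exact absurd hab hif

theorem length_insLoop : ∀ a m, m.length ≤ (insLoop p c v0 a m).length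
  | _, [] => by simp [insLoop]
  | a, b :: m => by
    have ih := length_insLoop b m
    simp only [insLoop]
    split
    · simp only [List.length_cons]; omega
    · simp only [List.length_cons]; omega

end InsLoop


namespace Pre

variable {L M : Type}

theorem mem_verts_iff {G : Pre L M} (C : Cyc G) (x : G.V) :
    x ∈ C.verts ↔ x = C.r ∨ x = C.h ∨ x ∈ C.side1 ∨ x ∈ C.side2 := by
  simp [Cyc.verts, Set.mem_union, Set.mem_insert_iff, Set.mem_setOf_eq, or_assoc]

theorem nonempty_of_card23 {A : Finset L} (hA : A.card = 2 ∨ A.card = 3) : ∃ x, x ∈ A := by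
  have : 0 < A.card := by rcases hA with h | h <;> omega
  obtain ⟨x, hx⟩ := Finset.card_pos.mp this
  exact ⟨x, hx⟩

/-! ### Deleting a non-leaf sink -/

section Del

variable (G : Pre L M) (s : G.V) (hr : G.root ≠ s) (hl : ∀ x, G.leaf x ≠ s)

@[reducible]
def del : Pre L M where
  V := {w : G.V // w ≠ s}
  adj a b := G.adj a.1 b.1
  root := ⟨G.root, hr⟩
  leaf x := ⟨G.leaf x, hl x⟩
  lab w := G.lab w.1

theorem del_reach_up {a b : (G.del s hr hl).V}
    (h : Relation.ReflTransGen (G.del s hr hl).adj a b) :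
    Relation.ReflTransGen G.adj a.1 b.1 :=
  Relation.ReflTransGen.lift Subtype.val (fun _ _ h => h) _ _ h

theorem del_reach_down (hsink : ∀ w, ¬ G.adj s w) {a b : G.V} (ha : a ≠ s)
    (h : Relation.ReflTransGen G.adj a b) :
    ∀ (hb : b ≠ s), Relation.ReflTransGen (G.del s hr hl).adj ⟨a, ha⟩ ⟨b, hb⟩ := by
  induction h with
  | refl => exact fun hb => .refl
  | @tail u b' h e ih =>
    intro hb
    have hu : u ≠ s := fun hc => hsink b' (by rw [← hc]; exact e)
    exact Relation.ReflTransGen.tail (ih hu) e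

theorem del_F (hsink : ∀ w, ¬ G.adj s w) (w : (G.del s hr hl).V) (x : L) :
    x ∈ (G.del s hr hl).F w ↔ x ∈ G.F w.1 := by
  constructor
  · intro hx; exact del_reach_up G s hr hl hx
  · intro hx; exact del_reach_down G s hr hl hsink w.2 hx (hl x)

def del_cyc (C : Cyc (G.del s hr hl)) : Cyc G where
  r := C.r.1
  h := C.h.1
  side1 := C.side1.map Subtype.val
  side2 := C.side2.map Subtype.val
  chain1 := by
    have := List.isChain_map_of_isChain Subtype.val (fun a b h => h) C.chain1
    simp only [List.map_cons, List.map_append, List.map_nil] at this; exact this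
  chain2 := by
    have := List.isChain_map_of_isChain Subtype.val (fun a b h => h) C.chain2
    simp only [List.map_cons, List.map_append, List.map_nil] at this; exact this
  ne := fun e => C.ne (Subtype.ext e)
  nodup1 := by
    have := C.nodup1.map Subtype.val_injective
    simp only [List.map_cons, List.map_append, List.map_nil] at this; exact this
  nodup2 := by
    have := C.nodup2.map Subtype.val_injective
    simp only [List.map_cons, List.map_append, List.map_nil] at this; exact this
  disj := by
    intro v hv1 hv2
    obtain ⟨w, hw, rfl⟩ := List.mem_map.mp hv1
    obtain ⟨w2, hw2, e⟩ := List.mem_map.mp hv2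
    have : w2 = w := Subtype.ext e
    exact C.disj w hw (this ▸ hw2)
  nontriv := by
    rcases C.nontriv with h | h
    · exact Or.inl (fun e => h (List.map_eq_nil_iff.mp e))
    · exact Or.inr (fun e => h (List.map_eq_nil_iff.mp e))

theorem del_cyc_verts (C : Cyc (G.del s hr hl)) (x : (G.del s hr hl).V) :
    x.1 ∈ (G.del_cyc s hr hl C).verts ↔ x ∈ C.verts := by
  rw [mem_verts_iff, mem_verts_iff]
  simp only [del_cyc, List.mem_map]
  constructor
  · rintro (h | h | ⟨w, hw, e⟩ | ⟨w, hw, e⟩)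
    · exact Or.inl (Subtype.ext h)
    · exact Or.inr (Or.inl (Subtype.ext h))
    · exact Or.inr (Or.inr (Or.inl ((Subtype.ext e : w = x) ▸ hw)))
    · exact Or.inr (Or.inr (Or.inr ((Subtype.ext e : w = x) ▸ hw)))
  · rintro (rfl | rfl | h | h)
    · exact Or.inl rfl
    · exact Or.inr (Or.inl rfl)
    · exact Or.inr (Or.inr (Or.inl ⟨x, h, rfl⟩))
    · exact Or.inr (Or.inr (Or.inr ⟨x, h, rfl⟩))

theorem del_invar {dv : Finset L → Option M} (inv : G.Invar dv)
    (hsink : ∀ w, ¬ G.adj s w) : (G.del s hr hl).Invar dv := by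
  constructor
  · intro v hv
    exact inv.acyclic v.1 (Relation.TransGen.lift Subtype.val (fun _ _ h => h) _ _ hv)
  · intro u h
    exact inv.root_no_in u.1 h
  · intro v
    exact del_reach_down G s hr hl hsink hr (inv.connected v.1) v.2
  · intro x y e
    exact inv.leaf_inj (congrArg Subtype.val e)
  · intro x w h
    exact inv.leaf_no_out x w.1 h
  · intro C C' v hv hv'
    have h1 := (del_cyc_verts G s hr hl C v).mpr hv
    have h2 := (del_cyc_verts G s hr hl C' v).mpr hv'
    have heq := inv.level1 (G.del_cyc s hr hl C) (G.del_cyc s hr hl C') v.1 h1 h2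
    ext x
    constructor
    · intro hx
      exact (del_cyc_verts G s hr hl C' x).mp (heq ▸ (del_cyc_verts G s hr hl C x).mpr hx)
    · intro hx
      exact (del_cyc_verts G s hr hl C x).mp (heq ▸ (del_cyc_verts G s hr hl C' x).mpr hx)
  · intro A hA w hw
    refine inv.rep A hA w.1 ⟨?_, ?_⟩
    · intro x hx
      exact (del_F G s hr hl hsink w x).mp (hw.1 x hx)
    · intro u hu hcov
      by_cases hus : u = s
      · subst hus
        obtain ⟨x0, hx0⟩ := nonempty_of_card23 hA
        have : x0 ∈ G.F u := hcov x0 hx0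
        rcases Relation.ReflTransGen.cases_head this with heq | ⟨z, hz, _⟩
        · exact hl x0 heq.symm
        · exact hsink z hz
      · exact hw.2 ⟨u, hus⟩ hu (fun x hx => (del_F G s hr hl hsink ⟨u, hus⟩ x).mpr (hcov x hx))

end Del

end Pre


namespace Pre

variable {L M : Type}

/-! ### Contracting an in-degree-one out-degree-one vertex -/

section Contr

variable (G : Pre L M) (v0 p c : G.V) (hr : G.root ≠ v0) (hl : ∀ x, G.leaf x ≠ v0)

@[reducible]
def contr : Pre L M where
  V := {w : G.V // w ≠ v0}
  adj a b := G.adj a.1 b.1 ∨ (a.1 = p ∧ b.1 = c)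
  root := ⟨G.root, hr⟩
  leaf x := ⟨G.leaf x, hl x⟩
  lab w := G.lab w.1

theorem contr_up (hp : G.adj p v0) (hc : G.adj v0 c) {a b : (G.contr v0 p c hr hl).V}
    (h : Relation.ReflTransGen (G.contr v0 p c hr hl).adj a b) :
    Relation.ReflTransGen G.adj a.1 b.1 := by
  induction h with
  | refl => exact .refl
  | @tail u b' h e ih =>
    rcases e with e | ⟨e1, e2⟩
    · exact ih.tail e
    · rw [e2]
      exact ih.trans (by rw [e1]; exact Relation.ReflTransGen.head hp (Relation.ReflTransGen.single hc))

theorem contr_down (hpu : ∀ z, G.adj z v0 → z = p) (hcu : ∀ z, G.adj v0 z → z = c)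
    (hpv : p ≠ v0) (hcv : c ≠ v0) {a : G.V} (ha : a ≠ v0)
    {b : G.V} (h : Relation.ReflTransGen G.adj a b) :
    (∀ (hb : b ≠ v0), Relation.ReflTransGen (G.contr v0 p c hr hl).adj ⟨a, ha⟩ ⟨b, hb⟩) ∧
      (b = v0 → Relation.ReflTransGen (G.contr v0 p c hr hl).adj ⟨a, ha⟩ ⟨p, hpv⟩) := by
  induction h with
  | refl => exact ⟨fun hb => .refl, fun e => absurd e ha⟩
  | @tail u b' h e ih =>
    constructor
    · intro hb
      by_cases hu : u = v0
      · have hbc : b' = c := hcu b' (by rw [← hu]; exact e)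
        have base := ih.2 hu
        have h2 : Relation.ReflTransGen (G.contr v0 p c hr hl).adj ⟨a, ha⟩ ⟨c, hcv⟩ :=
          base.tail (Or.inr ⟨rfl, rfl⟩)
        rw [show (⟨b', hb⟩ : (G.contr v0 p c hr hl).V) = ⟨c, hcv⟩ from Subtype.ext hbc]
        exact h2
      · exact (ih.1 hu).tail (Or.inl e)
    · intro hb
      have hup : u = p := hpu u (by rw [← hb]; exact e)
      have hu : u ≠ v0 := fun hh => hpv (hup.symm.trans hh)
      have h2 := ih.1 hu
      rw [show (⟨p, hpv⟩ : (G.contr v0 p c hr hl).V) = ⟨u, hu⟩ from Subtype.ext hup.symm]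
      exact h2

theorem contr_F (hp : G.adj p v0) (hc : G.adj v0 c) (hpu : ∀ z, G.adj z v0 → z = p) (hcu : ∀ z, G.adj v0 z → z = c)
    (hpv : p ≠ v0) (hcv : c ≠ v0) (w : (G.contr v0 p c hr hl).V) (x : L) :
    x ∈ (G.contr v0 p c hr hl).F w ↔ x ∈ G.F w.1 := by
  constructor
  · intro hx; exact contr_up G v0 p c hr hl hp hc hx
  · intro hx
    exact (contr_down G v0 p c hr hl hpu hcu hpv hcv w.2 hx).1 (hl x)

theorem F_v0_sub (hlx : ∀ x, G.leaf x ≠ v0) (hcu : ∀ z, G.adj v0 z → z = c) :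
    ∀ x ∈ G.F v0, x ∈ G.F c := by
  intro x hx
  rcases Relation.ReflTransGen.cases_head hx with heq | ⟨u, hu, h2⟩
  · exact absurd heq.symm (hlx x)
  · rw [← hcu u hu]; exact h2

/-- Lift one side of a cycle of the contracted network to the original network. -/
theorem lift_side (hp : G.adj p v0) (hc : G.adj v0 c) {r h : (G.contr v0 p c hr hl).V} {s : List (G.contr v0 p c hr hl).V}
    (hch : List.Chain (G.contr v0 p c hr hl).adj r (s ++ [h]))
    (hnd : (r :: (s ++ [h])).Nodup) :
    ∃ s' : List G.V,
      List.Chain G.adj r.1 (s' ++ [h.1]) ∧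
      (r.1 :: (s' ++ [h.1])).Nodup ∧
      (∀ x ∈ s', x ∈ s.map Subtype.val ∨ x = v0) ∧
      (∀ x ∈ s.map Subtype.val, x ∈ s' ∨ x = h.1) ∧
      (v0 ∈ s' → ∃ A B, (r.1 :: (s.map Subtype.val ++ [h.1])) = A ++ p :: c :: B) ∧
      (s ≠ [] → s' ≠ []) := by
  classical
  set mid : List G.V := s.map Subtype.val ++ [h.1] with hmid
  set Lf : List G.V := insLoop p c v0 r.1 mid with hLf
  have hmidne : mid ≠ [] := by simp [hmid]
  have hv0mid : v0 ∉ r.1 :: mid := by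
    intro hmem
    rcases List.mem_cons.mp hmem with e | hmem
    · exact r.2 e.symm
    rcases List.mem_append.mp hmem with hmem | hmem
    · obtain ⟨w, _, e⟩ := List.mem_map.mp hmem
      exact w.2 e
    · have e : v0 = h.1 := by simpa using hmem
      exact h.2 e.symm
  have hlast : Lf.getLast? = some h.1 := by
    rw [hLf, getLast?_insLoop p c v0 _ mid hmidne, hmid]
    exact List.getLast?_concat
  have hshape : Lf.dropLast ++ [h.1] = Lf :=
    List.dropLast_append_getLast? h.1 (by rw [Option.mem_def]; exact hlast)
  refine ⟨Lf.dropLast, ?_, ?_, ?_, ?_, ?_, ?_⟩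
  · -- chain
    have base : List.Chain (fun a b : (G.contr v0 p c hr hl).V =>
        G.adj a.1 b.1 ∨ (a.1 = p ∧ b.1 = c)) r (s ++ [h]) := hch
    have proj : List.Chain (fun x y => G.adj x y ∨ (x = p ∧ y = c)) r.1
        ((s ++ [h]).map Subtype.val) := (List.isChain_cons_map Subtype.val).mpr base
    have proj2 : List.Chain (fun x y => G.adj x y ∨ (x = p ∧ y = c)) r.1 mid := by
      rw [hmid]; simp only [List.map_cons, List.map_append, List.map_nil] at proj; exact proj
    have := chain_insLoop p c v0 hp hc r.1 mid proj2
    rw [← hLf] at this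
    rw [hshape]
    exact this
  · -- nodup
    have hndp : (r.1 :: mid).Nodup := by
      have := hnd.map Subtype.val_injective
      rw [hmid]; simp only [List.map_cons, List.map_append, List.map_nil] at this; exact this
    have := nodup_insLoop p c v0 r.1 mid hndp hv0mid
    rw [← hLf] at this
    rw [hshape]
    exact this
  · -- sub
    intro x hx
    have hxL : x ∈ Lf := by
      rw [← hshape]; exact List.mem_append.mpr (Or.inl hx)
    rcases insLoop_sub p c v0 r.1 mid x (by rw [hLf] at hxL; exact hxL) with hxm | hxm
    · rcases List.mem_append.mp (by rw [hmid] at hxm; exact hxm) with hxm | hxm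
      · exact Or.inl hxm
      · -- x = h.1 : impossible since x ∈ dropLast and h.1 is the (nodup) last
        exfalso
        have hx1 : x = h.1 := by simpa using hxm
        have hndL : Lf.Nodup := by
          have hndp : (r.1 :: mid).Nodup := by
            have := hnd.map Subtype.val_injective
            rw [hmid]; simp only [List.map_cons, List.map_append, List.map_nil] at this; exact this
          exact (List.nodup_cons.mp (nodup_insLoop p c v0 r.1 mid hndp hv0mid)).2
        have : List.Disjoint Lf.dropLast [h.1] :=
          List.disjoint_of_nodup_append (by rw [hshape]; exact hndL)
        exact this hx (by rw [← hx1]; simp)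
    · exact Or.inr hxm
  · -- sup
    intro x hx
    have : x ∈ mid := by rw [hmid]; exact List.mem_append.mpr (Or.inl hx)
    have hxL : x ∈ Lf := by rw [hLf]; exact sub_insLoop p c v0 r.1 mid x this
    rw [← hshape] at hxL
    rcases List.mem_append.mp hxL with h1 | h1
    · exact Or.inl h1
    · exact Or.inr (by simpa using h1)
  · -- v0 split
    intro hv0
    have hxL : v0 ∈ Lf := by
      rw [← hshape]; exact List.mem_append.mpr (Or.inl hv0)
    exact v0_mem_insLoop p c v0 r.1 mid hv0mid (by rw [hLf] at hxL; exact hxL)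
  · -- nontriv
    intro hs hds
    have h1 : mid.length ≤ Lf.length := by rw [hLf]; exact length_insLoop p c v0 r.1 mid
    have h2 : 2 ≤ mid.length := by
      rw [hmid, List.length_append, List.length_map, List.length_singleton]
      have : 0 < s.length := List.length_pos_iff.mpr hs
      omega
    have h3 : Lf.dropLast.length = Lf.length - 1 := List.length_dropLast
    have : 0 < Lf.dropLast.length := by omega
    rw [hds] at this
    simp at this


theorem contr_cyc_ex (hp : G.adj p v0) (hc : G.adj v0 c) (hpc : p ≠ c)
    (C : Cyc (G.contr v0 p c hr hl)) :
    ∃ D : Cyc G,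
      (∀ x : (G.contr v0 p c hr hl).V, x ∈ C.verts → x.1 ∈ D.verts) ∧
      (∀ z ∈ D.verts, z = v0 ∨ ∃ w, w ∈ C.verts ∧ w.1 = z) := by
  obtain ⟨s1, hch1, hnd1, sub1, sup1, hv01, hne1⟩ :=
    lift_side G v0 p c hr hl hp hc C.chain1 C.nodup1
  obtain ⟨s2, hch2, hnd2, sub2, sup2, hv02, hne2⟩ :=
    lift_side G v0 p c hr hl hp hc C.chain2 C.nodup2
  have ndp1 : (C.r.1 :: (C.side1.map Subtype.val ++ [C.h.1])).Nodup := by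
    have := C.nodup1.map Subtype.val_injective
    simp only [List.map_cons, List.map_append, List.map_nil] at this; exact this
  have djp : ∀ y ∈ C.side1.map Subtype.val, y ∉ C.side2.map Subtype.val := by
    intro y hy1 hy2
    obtain ⟨w, hw, rfl⟩ := List.mem_map.mp hy1
    obtain ⟨w2, hw2, e⟩ := List.mem_map.mp hy2
    exact C.disj w hw ((Subtype.ext e : w2 = w) ▸ hw2)
  have hdisj : ∀ x ∈ s1, x ∉ s2 := by
    intro x hx1 hx2
    by_cases hxv : x = v0
    · subst hxv
      obtain ⟨A1, B1, e1⟩ := hv01 hx1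
      obtain ⟨A2, B2, e2⟩ := hv02 hx2
      have hpm1 : p ∈ C.r.1 :: (C.side1.map Subtype.val ++ [C.h.1]) := by rw [e1]; simp
      have hpm2 : p ∈ C.r.1 :: (C.side2.map Subtype.val ++ [C.h.1]) := by rw [e2]; simp
      have hcm1 : c ∈ C.r.1 :: (C.side1.map Subtype.val ++ [C.h.1]) := by rw [e1]; simp
      have hcm2 : c ∈ C.r.1 :: (C.side2.map Subtype.val ++ [C.h.1]) := by rw [e2]; simp
      have hpr := shared_mem ndp1 djp hpm1 hpm2
      have hcr := shared_mem ndp1 djp hcm1 hcm2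
      have hs1 : C.side1.map Subtype.val = [] := split_forces ndp1 hpr hcr hpc e1
      have ndp2 : (C.r.1 :: (C.side2.map Subtype.val ++ [C.h.1])).Nodup := by
        have := C.nodup2.map Subtype.val_injective
        simp only [List.map_cons, List.map_append, List.map_nil] at this; exact this
      have hs2 : C.side2.map Subtype.val = [] := split_forces ndp2 hpr hcr hpc e2
      rcases C.nontriv with hnt | hnt
      · exact hnt (List.map_eq_nil_iff.mp hs1)
      · exact hnt (List.map_eq_nil_iff.mp hs2)
    · have h1 : x ∈ C.side1.map Subtype.val := (sub1 x hx1).resolve_right hxv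
      have h2 : x ∈ C.side2.map Subtype.val := (sub2 x hx2).resolve_right hxv
      exact djp x h1 h2
  refine ⟨⟨C.r.1, C.h.1, s1, s2, hch1, hch2, fun e => C.ne (Subtype.ext e), hnd1, hnd2,
      hdisj, ?_⟩, ?_, ?_⟩
  · rcases C.nontriv with hnt | hnt
    · exact Or.inl (hne1 hnt)
    · exact Or.inr (hne2 hnt)
  · intro x hx
    rw [mem_verts_iff] at hx
    rw [mem_verts_iff]
    rcases hx with rfl | rfl | hx | hx
    · exact Or.inl rfl
    · exact Or.inr (Or.inl rfl)
    · rcases sup1 x.1 (List.mem_map.mpr ⟨x, hx, rfl⟩) with h1 | h1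
      · exact Or.inr (Or.inr (Or.inl h1))
      · exact Or.inr (Or.inl h1)
    · rcases sup2 x.1 (List.mem_map.mpr ⟨x, hx, rfl⟩) with h1 | h1
      · exact Or.inr (Or.inr (Or.inr h1))
      · exact Or.inr (Or.inl h1)
  · intro z hz
    rw [mem_verts_iff] at hz
    rcases hz with rfl | rfl | hz | hz
    · exact Or.inr ⟨C.r, by rw [mem_verts_iff]; exact Or.inl rfl, rfl⟩
    · exact Or.inr ⟨C.h, by rw [mem_verts_iff]; exact Or.inr (Or.inl rfl), rfl⟩
    · rcases sub1 z hz with h1 | h1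
      · obtain ⟨w, hw, rfl⟩ := List.mem_map.mp h1
        exact Or.inr ⟨w, by rw [mem_verts_iff]; exact Or.inr (Or.inr (Or.inl hw)), rfl⟩
      · exact Or.inl h1
    · rcases sub2 z hz with h1 | h1
      · obtain ⟨w, hw, rfl⟩ := List.mem_map.mp h1
        exact Or.inr ⟨w, by rw [mem_verts_iff]; exact Or.inr (Or.inr (Or.inr hw)), rfl⟩
      · exact Or.inl h1

theorem contr_invar {dv : Finset L → Option M} (inv : G.Invar dv)
    (hp : G.adj p v0) (hpu : ∀ z, G.adj z v0 → z = p)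
    (hc : G.adj v0 c) (hcu : ∀ z, G.adj v0 z → z = c) :
    (G.contr v0 p c hr hl).Invar dv := by
  have hpv : p ≠ v0 := fun e => inv.acyclic v0 (Relation.TransGen.single (e ▸ hp))
  have hcv : c ≠ v0 := fun e => inv.acyclic v0 (Relation.TransGen.single (e ▸ hc))
  have hpc : p ≠ c := fun e => inv.acyclic v0 ((Relation.TransGen.single hc).tail (e ▸ hp))
  have edge : ∀ a b : (G.contr v0 p c hr hl).V, (G.contr v0 p c hr hl).adj a b →
      Relation.TransGen G.adj a.1 b.1 := by
    rintro a b (e | ⟨e1, e2⟩)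
    · exact .single e
    · rw [e1, e2]; exact (Relation.TransGen.single hp).tail hc
  constructor
  · intro v hv
    refine inv.acyclic v.1 ?_
    have lift : ∀ {x y : (G.contr v0 p c hr hl).V},
        Relation.TransGen (G.contr v0 p c hr hl).adj x y →
        Relation.TransGen G.adj x.1 y.1 := by
      intro x y hxy
      induction hxy with
      | single e => exact edge _ _ e
      | tail h e ih => exact ih.trans (edge _ _ e)
    exact lift hv
  · rintro u (e | ⟨e1, e2⟩)
    · exact inv.root_no_in u.1 e
    · exact inv.root_no_in v0 (by rw [show G.root = c from e2]; exact hc)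
  · intro v
    exact (contr_down G v0 p c hr hl hpu hcu hpv hcv hr (inv.connected v.1)).1 v.2
  · intro x y e
    exact inv.leaf_inj (congrArg Subtype.val e)
  · rintro x w (e | ⟨e1, e2⟩)
    · exact inv.leaf_no_out x w.1 e
    · exact inv.leaf_no_out x v0 (by rw [show G.leaf x = p from e1]; exact hp)
  · intro C C' v hv hv'
    obtain ⟨D, up, down⟩ := contr_cyc_ex G v0 p c hr hl hp hc hpc C
    obtain ⟨D', up', down'⟩ := contr_cyc_ex G v0 p c hr hl hp hc hpc C'
    have heq := inv.level1 D D' v.1 (up v hv) (up' v hv')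
    ext x
    constructor
    · intro hx
      have h1 := up x hx
      rw [heq] at h1
      rcases down' x.1 h1 with e | ⟨w, hw, e⟩
      · exact absurd e x.2
      · rwa [show x = w from Subtype.ext e.symm]
    · intro hx
      have h1 := up' x hx
      rw [← heq] at h1
      rcases down x.1 h1 with e | ⟨w, hw, e⟩
      · exact absurd e x.2
      · rwa [show x = w from Subtype.ext e.symm]
  · intro A hA w hw
    refine inv.rep A hA w.1 ⟨?_, ?_⟩
    · intro x hx
      exact (contr_F G v0 p c hr hl hp hc hpu hcu hpv hcv w x).mp (hw.1 x hx)
    · intro u hu hcov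
      by_cases huv : u = v0
      · subst huv
        have hwp : w.1 = p := hpu w.1 hu
        have hcovc : ∀ x ∈ A, x ∈ G.F c := fun x hx => F_v0_sub G u c hl hcu x (hcov x hx)
        exact hw.2 ⟨c, hcv⟩ (Or.inr ⟨hwp, rfl⟩)
          (fun x hx => (contr_F G u p c hr hl hp hc hpu hcu hpv hcv ⟨c, hcv⟩ x).mpr (hcovc x hx))
      · exact hw.2 ⟨u, huv⟩ (Or.inl hu)
          (fun x hx => (contr_F G v0 p c hr hl hp hc hpu hcu hpv hcv ⟨u, huv⟩ x).mpr (hcov x hx))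

end Contr

end Pre


namespace Pre

theorem finish {L M : Type} [Fintype L] [DecidableEq L] (G : Pre L M)
    {dv : Finset L → Option M} (inv : G.Invar dv)
    (h1 : ∀ v : G.V, (∀ w : G.V, ¬ G.adj v w) → v = G.root ∨ ∃ x, G.leaf x = v)
    (h2 : ∀ v : G.V, ¬ ((∃! u : G.V, G.adj u v) ∧ (∃! w : G.V, G.adj v w))) :
    ∃ (P : PhyloNetwork L) (t : P.V → M), P.IsLevelOne ∧
      ∀ A : Finset L, A.card = 2 ∨ A.card = 3 → ∀ v : P.V, P.IsLca A v →
        dv A = some (t v) := by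
  refine ⟨{ V := G.V, adj := G.adj, root := G.root, leaf := G.leaf, acyclic := inv.acyclic, root_no_in := inv.root_no_in, connected := inv.connected, leaf_inj := inv.leaf_inj, leaf_no_out := inv.leaf_no_out, leaves_only := h1, no_inout_one := h2, instFin := G.instFin, instDec := G.instDec }, G.lab, ?_, ?_⟩
  · intro C C' v hv hv'
    exact inv.level1 ⟨C.r, C.h, C.side1, C.side2, C.chain1, C.chain2, C.ne, C.nodup1,
      C.nodup2, C.disj, C.nontriv⟩ ⟨C'.r, C'.h, C'.side1, C'.side2, C'.chain1, C'.chain2,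
      C'.ne, C'.nodup1, C'.nodup2, C'.disj, C'.nontriv⟩ v hv hv'
  · intro A hA v hv
    exact inv.rep A hA v hv

theorem main {L M : Type} [Fintype L] [DecidableEq L] :
    ∀ (n : ℕ) (G : Pre L M) (dv : Finset L → Option M),
      Fintype.card G.V ≤ n → G.Invar dv →
    ∃ (P : PhyloNetwork L) (t : P.V → M), P.IsLevelOne ∧
      ∀ A : Finset L, A.card = 2 ∨ A.card = 3 → ∀ v : P.V, P.IsLca A v →
        dv A = some (t v) := by
  intro n
  induction n with
  | zero =>
    intro G dv hcard _
    exfalso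
    have : Fintype.card G.V = 0 := Nat.le_zero.mp hcard
    exact (Fintype.card_eq_zero_iff.mp this).elim G.root
  | succ n ih =>
    intro G dv hcard inv
    classical
    by_cases hbad1 : ∃ s : G.V, (∀ w, ¬ G.adj s w) ∧ s ≠ G.root ∧ ∀ x, G.leaf x ≠ s
    · obtain ⟨s, hsink, hsr, hsl⟩ := hbad1
      have inv' := G.del_invar s hsr.symm hsl inv hsink
      have hlt : Fintype.card {w : G.V // w ≠ s} < Fintype.card G.V :=
        Fintype.card_subtype_lt (x := s) (by simp)
      have hce : Fintype.card (G.del s hsr.symm hsl).V = Fintype.card {w : G.V // w ≠ s} :=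
        Fintype.card_congr (Equiv.refl _)
      exact ih (G.del s hsr.symm hsl) dv (by omega) inv'
    by_cases hbad2 : ∃ v0 : G.V, (∃! u : G.V, G.adj u v0) ∧ (∃! w : G.V, G.adj v0 w)
    · obtain ⟨v0, ⟨p, hp, hpu⟩, ⟨c, hc, hcu⟩⟩ := hbad2
      have hr : G.root ≠ v0 := fun e => inv.root_no_in p (by rw [e]; exact hp)
      have hl : ∀ x, G.leaf x ≠ v0 := fun x e => inv.leaf_no_out x c (by rw [e]; exact hc)
      have inv' := G.contr_invar v0 p c hr hl inv hp hpu hc hcu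
      have hlt : Fintype.card {w : G.V // w ≠ v0} < Fintype.card G.V :=
        Fintype.card_subtype_lt (x := v0) (by simp)
      have hce : Fintype.card (G.contr v0 p c hr hl).V = Fintype.card {w : G.V // w ≠ v0} :=
        Fintype.card_congr (Equiv.refl _)
      exact ih (G.contr v0 p c hr hl) dv (by omega) inv'
    · push_neg at hbad1
      refine finish G inv ?_ (fun v hv => hbad2 ⟨v, hv⟩)
      intro v hvsink
      by_cases hvr : v = G.root
      · exact Or.inl hvr
      · exact Or.inr (hbad1 v hvsink hvr)

end Pre

end PrunePre

/-- Restrictions (to subsets of size at least 3) of level-1 representable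
symbolic 3-dissimilarities are level-1 representable. -/
theorem restrict_levelOneRepresentable {X M : Type}
    [Fintype X] [DecidableEq X] [Fintype M] [DecidableEq M]
    (d : SymbolicDissim3 X M) (hrep : d.LevelOneRepresentable)
    (Y : Finset X) (hY : 3 ≤ Y.card) :
    (d.restrict Y).LevelOneRepresentable := by
  classical
  obtain ⟨N, t, hlev, hrepN⟩ := hrep
  let G0 : PrunePre.Pre {x // x ∈ Y} M :=
    { V := N.V, adj := N.adj, root := N.root,
      leaf := fun y => N.leaf y.1, lab := t, instFin := N.instFin, instDec := N.instDec }
  have inv0 : G0.Invar (d.restrict Y).val := by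
    constructor
    · exact N.acyclic
    · exact N.root_no_in
    · exact N.connected
    · intro x y e
      exact Subtype.ext (N.leaf_inj e)
    · intro x w h
      exact N.leaf_no_out x.1 w h
    · intro C C' v hv hv'
      exact hlev ⟨C.r, C.h, C.side1, C.side2, C.chain1, C.chain2, C.ne, C.nodup1,
        C.nodup2, C.disj, C.nontriv⟩ ⟨C'.r, C'.h, C'.side1, C'.side2, C'.chain1, C'.chain2,
        C'.ne, C'.nodup1, C'.nodup2, C'.disj, C'.nontriv⟩ v hv hv'
    · intro A hA w hw
      have hBcard : (A.map (Function.Embedding.subtype fun x => x ∈ Y)).card = 2 ∨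
          (A.map (Function.Embedding.subtype fun x => x ∈ Y)).card = 3 := by
        rwa [Finset.card_map]
      refine hrepN _ hBcard w ⟨?_, ?_⟩
      · intro z hz
        obtain ⟨x, hx, rfl⟩ := Finset.mem_map.mp hz
        exact hw.1 x hx
      · intro u hu hcov
        exact hw.2 u hu (fun x hx => hcov _ (Finset.mem_map.mpr ⟨x, hx, rfl⟩))
  obtain ⟨P, t', hP1, hP2⟩ :=
    PrunePre.Pre.main (@Fintype.card G0.V G0.instFin) G0 (d.restrict Y).val le_rfl inv0
  exact ⟨P, t', hP1, hP2⟩
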